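/- For p > N and α_p = 1 - N/p, the sharp Morrey constant 𝔪_p(ℝ^N) = inf{∫_{ℝ^N}|∇u|^p dx : u ∈ C_0^∞(ℝ^N), [u]_{C^{0,α_p}(ℝ^N)} = 1} satisfies 𝔪_p(ℝ^N) ≤ N ω_N ((p-N)/(p-1))^{p-1}. -/

import Mathlib

open Set Metric MeasureTheory

noncomputable def holderSem {N : ℕ} (α : ℝ) (S : Set (EuclideanSpace ℝ (Fin N)))
    (u : EuclideanSpace ℝ (Fin N) → ℝ) : ENNReal :=
  ⨆ x ∈ S, ⨆ y ∈ S, ENNReal.ofReal (|u x - u y| / ‖x - y‖ ^ α)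

/-- The sharp Morrey constant on `ℝ^N`:
`𝔪_p(ℝ^N) = inf {∫ |∇u|^p : u ∈ C_0^∞(ℝ^N), [u]_{C^{0,α_p}} = 1}`, `α_p = 1 - N/p`. -/
noncomputable def morreyConst (N : ℕ) (p : ℝ) : ℝ :=
  sInf {E : ℝ | ∃ u : EuclideanSpace ℝ (Fin N) → ℝ, ContDiff ℝ (⊤ : ℕ∞) u ∧
    HasCompactSupport u ∧ holderSem (1 - (N : ℝ)/p) Set.univ u = 1 ∧
    E = ∫ x : EuclideanSpace ℝ (Fin N), ‖gradient u x‖ ^ p}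




variable {N : ℕ} {α : ℝ} {u : EuclideanSpace ℝ (Fin N) → ℝ}

lemma holderSem_univ_eq :
    holderSem α Set.univ u = ⨆ x, ⨆ y, ENNReal.ofReal (|u x - u y| / ‖x - y‖ ^ α) := by
  simp [holderSem]

lemma le_holderSem (x y : EuclideanSpace ℝ (Fin N)) :
    ENNReal.ofReal (|u x - u y| / ‖x - y‖ ^ α) ≤ holderSem α Set.univ u := by
  rw [holderSem_univ_eq]
  calc ENNReal.ofReal (|u x - u y| / ‖x - y‖ ^ α)
      ≤ ⨆ y, ENNReal.ofReal (|u x - u y| / ‖x - y‖ ^ α) :=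
        le_iSup (fun z => ENNReal.ofReal (|u x - u z| / ‖x - z‖ ^ α)) y
    _ ≤ _ := le_iSup (fun x => ⨆ y, ENNReal.ofReal (|u x - u y| / ‖x - y‖ ^ α)) x

lemma holderSem_le {C : ℝ} (h : ∀ x y, |u x - u y| / ‖x - y‖ ^ α ≤ C) :
    holderSem α Set.univ u ≤ ENNReal.ofReal C := by
  rw [holderSem_univ_eq]
  exact iSup_le fun x => iSup_le fun y => ENNReal.ofReal_le_ofReal (h x y)

lemma holderSem_const_mul (k : ℝ) :
    holderSem α Set.univ (fun x => k * u x) = ENNReal.ofReal |k| * holderSem α Set.univ u := by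
  rw [holderSem_univ_eq, holderSem_univ_eq]
  rw [ENNReal.mul_iSup]
  refine iSup_congr fun x => ?_
  rw [ENNReal.mul_iSup]
  refine iSup_congr fun y => ?_
  rw [← ENNReal.ofReal_mul (abs_nonneg k)]
  congr 1
  rw [← mul_sub, abs_mul, mul_div_assoc]



open Set Metric MeasureTheory



noncomputable def ramp (η : ℝ) : ℝ → ℝ := fun t => ∫ s in (0:ℝ)..t, Real.smoothTransition (s/η)

variable {η : ℝ}

lemma rampD_contDiff (hη : 0 < η) : ContDiff ℝ (⊤ : ℕ∞) (fun s => Real.smoothTransition (s/η)) :=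
  Real.smoothTransition.contDiff.comp (contDiff_id.div_const η)

lemma rampD_cont (hη : 0 < η) : Continuous (fun s => Real.smoothTransition (s/η)) :=
  (rampD_contDiff hη).continuous

lemma ramp_hasDerivAt (hη : 0 < η) (t : ℝ) :
    HasDerivAt (ramp η) (Real.smoothTransition (t/η)) t :=
  ((rampD_cont hη).integral_hasStrictDerivAt 0 t).hasDerivAt

lemma ramp_contDiff (hη : 0 < η) : ContDiff ℝ (⊤ : ℕ∞) (ramp η) := by
  rw [show ((⊤:ℕ∞) : ℕ∞) = (⊤:ℕ∞) from rfl, contDiff_infty_iff_deriv]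
  constructor
  · exact fun t => (ramp_hasDerivAt hη t).differentiableAt
  · have : deriv (ramp η) = fun s => Real.smoothTransition (s/η) := by
      funext t; exact (ramp_hasDerivAt hη t).deriv
    rw [this]; exact rampD_contDiff hη

lemma ramp_eq_zero (hη : 0 < η) {t : ℝ} (ht : t ≤ 0) : ramp η t = 0 := by
  rw [ramp, intervalIntegral.integral_congr (g := fun _ => (0:ℝ)) ?_, intervalIntegral.integral_zero]
  intro s hs
  rw [uIcc_of_ge ht] at hs
  exact Real.smoothTransition.zero_of_nonpos (div_nonpos_of_nonpos_of_nonneg hs.2 hη.le)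

lemma ramp_nonneg (hη : 0 < η) (t : ℝ) : 0 ≤ ramp η t := by
  rcases le_or_gt t 0 with h | h
  · rw [ramp_eq_zero hη h]
  · exact intervalIntegral.integral_nonneg h.le (fun s _ => Real.smoothTransition.nonneg _)

lemma rampD_intervalIntegrable (hη : 0 < η) (a b : ℝ) :
    IntervalIntegrable (fun s => Real.smoothTransition (s/η)) volume a b :=
  (rampD_cont hη).intervalIntegrable a b

lemma ramp_le (hη : 0 < η) (t : ℝ) : ramp η t ≤ max t 0 := by
  rcases le_or_gt t 0 with h | h
  · rw [ramp_eq_zero hη h]; exact le_max_right _ _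
  · refine le_trans ?_ (le_max_left _ _)
    calc ramp η t ≤ ∫ s in (0:ℝ)..t, (1:ℝ) := by
          refine intervalIntegral.integral_mono_on h.le (rampD_intervalIntegrable hη 0 t)
            intervalIntegrable_const (fun s _ => Real.smoothTransition.le_one _)
      _ = t := by simp
lemma ramp_ge (hη : 0 < η) (t : ℝ) : t - η ≤ ramp η t := by
  rcases le_or_gt t η with h | h
  · calc t - η ≤ 0 := by linarith
      _ ≤ ramp η t := ramp_nonneg hη t
  · have h0 : (0:ℝ) ≤ η := hη.le
    have key : ramp η t = (∫ s in (0:ℝ)..η, Real.smoothTransition (s/η))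
        + ∫ s in η..t, Real.smoothTransition (s/η) :=
      (intervalIntegral.integral_add_adjacent_intervals (rampD_intervalIntegrable hη 0 η)
        (rampD_intervalIntegrable hη η t)).symm
    have h1 : (0:ℝ) ≤ ∫ s in (0:ℝ)..η, Real.smoothTransition (s/η) :=
      intervalIntegral.integral_nonneg h0 (fun s _ => Real.smoothTransition.nonneg _)
    have h2 : (∫ s in η..t, Real.smoothTransition (s/η)) = t - η := by
      rw [intervalIntegral.integral_congr (g := fun _ => (1:ℝ)) ?_]
      · simp
      · intro s hs
        rw [uIcc_of_le h.le] at hs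
        exact Real.smoothTransition.one_of_one_le ((one_le_div hη).2 hs.1)
    rw [key, h2]; linarith



namespace MorreyAux

lemma norm_gradient_eq {N : ℕ} (u : EuclideanSpace ℝ (Fin N) → ℝ) (x : EuclideanSpace ℝ (Fin N)) :
    ‖gradient u x‖ = ‖fderiv ℝ u x‖ := by
  unfold gradient
  exact LinearIsometryEquiv.norm_map _ _

section Construction

variable {N : ℕ} {p δ η : ℝ}

set_option maxHeartbeats 1000000 in
lemma construction (hN : 0 < N) (hp : (N : ℝ) < p) (hδ : 0 < δ) (hη : 0 < η)
    (hlb : 0 < 1 - (δ^2 : ℝ) ^ ((p - N)/(p-1)/2) - η) :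
    morreyConst N p ≤
      ((N : ℝ) * (volume (ball (0 : EuclideanSpace ℝ (Fin N)) 1)).toReal *
        ((p - N) / (p - 1)) ^ (p - 1)) / (1 - (δ^2 : ℝ) ^ ((p - N)/(p-1)/2) - η) ^ p := by
  -- basic numeric facts
  have hN1 : (1 : ℝ) ≤ N := by exact_mod_cast hN
  have hp1 : (1 : ℝ) < p := lt_of_le_of_lt hN1 hp
  have hppos : (0 : ℝ) < p := lt_trans one_pos hp1
  set β : ℝ := (p - N)/(p-1) with hβ_def
  have hβpos : 0 < β := div_pos (by linarith) (by linarith)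
  have hβle1 : β ≤ 1 := by
    rw [div_le_one (by linarith)]; linarith
  set c : ℝ := ((1:ℝ) + δ^2) ^ (β/2) with hc_def
  have hδ2pos : (0:ℝ) < δ^2 := by positivity
  have hc1 : 1 ≤ c := by
    rw [hc_def]
    calc (1:ℝ) = (1:ℝ) ^ (β/2) := (Real.one_rpow _).symm
    _ ≤ ((1:ℝ) + δ^2) ^ (β/2) := Real.rpow_le_rpow one_pos.le (by linarith) (by positivity)
  set ρ : EuclideanSpace ℝ (Fin N) → ℝ := fun x => (‖x‖^2 + δ^2) ^ (β/2) with hρ_def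
  set u : EuclideanSpace ℝ (Fin N) → ℝ := fun x => ramp η (c - ρ x) with hu_def
  -- the pointwise derivative
  set a : EuclideanSpace ℝ (Fin N) → ℝ := fun x => (β/2) * (‖x‖^2 + δ^2) ^ (β/2 - 1) with ha_def
  set θ : EuclideanSpace ℝ (Fin N) → ℝ :=
    fun x => Real.smoothTransition ((c - ρ x)/η) with hθ_def
  set D : EuclideanSpace ℝ (Fin N) → (EuclideanSpace ℝ (Fin N)) →L[ℝ] ℝ :=
    fun x => θ x • (-((a x) • (2 • (innerSL ℝ x)))) with hD_def
  have hbase : ∀ x : EuclideanSpace ℝ (Fin N), (0:ℝ) < ‖x‖^2 + δ^2 := fun x => by positivity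
  have hu_deriv : ∀ x, HasFDerivAt u (D x) x := by
    intro x
    have hq : HasFDerivAt (fun y : EuclideanSpace ℝ (Fin N) => ‖y‖^2 + δ^2)
        (2 • (innerSL ℝ x)) x := (hasStrictFDerivAt_norm_sq x).hasFDerivAt.add_const _
    have hr : HasDerivAt (fun s : ℝ => s ^ (β/2)) ((β/2) * (‖x‖^2 + δ^2) ^ (β/2 - 1))
        (‖x‖^2 + δ^2) := Real.hasDerivAt_rpow_const (Or.inl (hbase x).ne')
    have hρ' : HasFDerivAt ρ ((a x) • (2 • (innerSL ℝ x))) x := by have := hr.comp_hasFDerivAt x hq; exact this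
    have hcρ : HasFDerivAt (fun y => c - ρ y) (-((a x) • (2 • (innerSL ℝ x)))) x :=
      hρ'.const_sub c
    exact (ramp_hasDerivAt hη (c - ρ x)).comp_hasFDerivAt x hcρ
  have hθ_nonneg : ∀ x, 0 ≤ θ x := fun x => Real.smoothTransition.nonneg _
  have hθ_le1 : ∀ x, θ x ≤ 1 := fun x => Real.smoothTransition.le_one _
  have ha_nonneg : ∀ x, 0 ≤ a x := fun x =>
    mul_nonneg (by positivity) (Real.rpow_nonneg (hbase x).le _)
  have hD_norm : ∀ x, ‖D x‖ = θ x * (a x * (2 * ‖x‖)) := by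
    intro x
    simp only [hD_def]
    rw [norm_smul (θ x) (-(a x • 2 • (innerSL ℝ) x)), norm_neg,
      norm_smul (a x) ((2:ℕ) • (innerSL ℝ) x), ← Nat.cast_smul_eq_nsmul ℝ 2 ((innerSL ℝ) x),
      norm_smul ((2:ℕ):ℝ) ((innerSL ℝ) x), innerSL_apply_norm]
    simp only [Real.norm_eq_abs, abs_of_nonneg (hθ_nonneg x), abs_of_nonneg (ha_nonneg x)]
    push_cast
    norm_num
  -- vanishing outside the unit ball
  have hρ_ge : ∀ x : EuclideanSpace ℝ (Fin N), 1 ≤ ‖x‖ → c ≤ ρ x := by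
    intro x hx
    rw [hc_def, hρ_def]
    exact Real.rpow_le_rpow (by positivity) (by nlinarith) (by positivity)
  have hθ_zero : ∀ x : EuclideanSpace ℝ (Fin N), 1 ≤ ‖x‖ → θ x = 0 := by
    intro x hx
    exact Real.smoothTransition.zero_of_nonpos
      (div_nonpos_of_nonpos_of_nonneg (by linarith [hρ_ge x hx]) hη.le)
  have hu_zero : ∀ x : EuclideanSpace ℝ (Fin N), 1 ≤ ‖x‖ → u x = 0 := by
    intro x hx
    exact ramp_eq_zero hη (by linarith [hρ_ge x hx])
  -- pointwise derivative bounds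
  have hD_le : ∀ x : EuclideanSpace ℝ (Fin N), ‖x‖ < 1 → ‖D x‖ ≤ β * ‖x‖ ^ (β - 1) := by
    intro x hx
    rcases eq_or_lt_of_le (norm_nonneg x) with h0 | h0
    · rw [hD_norm]
      rw [← h0]
      have : β * (0:ℝ) ^ (β - 1) = β * 0 ^ (β-1) := rfl
      calc θ x * (a x * (2 * 0)) = 0 := by ring
        _ ≤ β * (0:ℝ) ^ (β - 1) :=
          mul_nonneg hβpos.le (Real.rpow_nonneg le_rfl _)
    · have hkey : (‖x‖^2 + δ^2) ^ (β/2 - 1) ≤ (‖x‖^2) ^ (β/2 - 1) :=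
        Real.rpow_le_rpow_of_nonpos (by positivity) (by linarith [hδ2pos]) (by linarith)
      have hsq : ((‖x‖^2 : ℝ)) ^ (β/2 - 1) = ‖x‖ ^ (β - 2) := by
        rw [← Real.rpow_natCast ‖x‖ 2, ← Real.rpow_mul (norm_nonneg x)]
        congr 1
        push_cast
        ring
      calc ‖D x‖ = θ x * (a x * (2 * ‖x‖)) := hD_norm x
        _ ≤ 1 * (a x * (2 * ‖x‖)) := by
            apply mul_le_mul_of_nonneg_right (hθ_le1 x)
            exact mul_nonneg (ha_nonneg x) (by positivity)
        _ = β * ((‖x‖^2 + δ^2) ^ (β/2 - 1) * ‖x‖) := by rw [ha_def]; ring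
        _ ≤ β * (‖x‖ ^ (β - 2) * ‖x‖) := by
            apply mul_le_mul_of_nonneg_left _ hβpos.le
            apply mul_le_mul_of_nonneg_right _ (norm_nonneg x)
            rw [← hsq]; exact hkey
        _ = β * ‖x‖ ^ (β - 1) := by
            have hx1 : ‖x‖ ^ (β-2) * ‖x‖ = ‖x‖ ^ (β-1) := by
              nth_rewrite 2 [← Real.rpow_one ‖x‖]
              rw [← Real.rpow_add h0]
              congr 1
              ring
            rw [hx1]
  -- global derivative bound
  set C₁ : ℝ := β * (δ^2) ^ (β/2 - 1) with hC₁_def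
  have hC₁_nonneg : 0 ≤ C₁ := mul_nonneg hβpos.le (Real.rpow_nonneg hδ2pos.le _)
  have hD_glob : ∀ x : EuclideanSpace ℝ (Fin N), ‖D x‖ ≤ C₁ := by
    intro x
    rcases lt_or_ge ‖x‖ 1 with hx | hx
    · rw [hD_norm]
      have h1 : (‖x‖^2 + δ^2) ^ (β/2 - 1) ≤ (δ^2) ^ (β/2 - 1) :=
        Real.rpow_le_rpow_of_nonpos hδ2pos (by nlinarith [sq_nonneg ‖x‖]) (by linarith)
      have h2 : 2 * ‖x‖ ≤ 2 := by linarith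
      calc θ x * (a x * (2 * ‖x‖)) ≤ 1 * (a x * (2 * 1)) := by
            apply mul_le_mul (hθ_le1 x) _ (mul_nonneg (ha_nonneg x) (by positivity)) zero_le_one
            apply mul_le_mul_of_nonneg_left (by linarith) (ha_nonneg x)
        _ = (β/2) * (‖x‖^2 + δ^2) ^ (β/2 - 1) * 2 := by rw [ha_def]; ring
        _ ≤ (β/2) * (δ^2) ^ (β/2 - 1) * 2 := by
            apply mul_le_mul_of_nonneg_right _ (by norm_num)
            exact mul_le_mul_of_nonneg_left h1 (by positivity)
        _ = C₁ := by rw [hC₁_def]; ring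
    · rw [hD_norm, hθ_zero x hx]
      simpa using hC₁_nonneg
  -- basic u properties
  have hρ_nonneg : ∀ x, 0 ≤ ρ x := fun x => Real.rpow_nonneg (hbase x).le _
  have hu_nonneg : ∀ x, 0 ≤ u x := fun x => ramp_nonneg hη _
  have hu_le_c : ∀ x, u x ≤ c := by
    intro x
    refine le_trans (ramp_le hη _) ?_
    rcases max_cases (c - ρ x) 0 with ⟨h,_⟩|⟨h,_⟩ <;> rw [h]
    · linarith [hρ_nonneg x]
    · linarith
  have hu0 : 1 - (δ^2 : ℝ) ^ (β/2) - η ≤ u 0 := by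
    have h0 : ρ 0 = (δ^2 : ℝ) ^ (β/2) := by
      rw [hρ_def]; simp
    calc 1 - (δ^2 : ℝ) ^ (β/2) - η ≤ c - ρ 0 - η := by rw [h0]; linarith
      _ ≤ u 0 := ramp_ge hη _
  -- regularity
  have hu_contDiff : ContDiff ℝ (⊤ : ℕ∞) u := by
    have hinner : ContDiff ℝ (⊤ : ℕ∞) (fun x : EuclideanSpace ℝ (Fin N) => c - ρ x) := by
      rw [contDiff_iff_contDiffAt]
      intro x
      have h1 : ContDiffAt ℝ (⊤ : ℕ∞) (fun y : EuclideanSpace ℝ (Fin N) => ‖y‖^2 + δ^2) x :=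
        ((contDiff_norm_sq ℝ).add contDiff_const).contDiffAt
      have h2 : ContDiffAt ℝ (⊤ : ℕ∞) (fun s : ℝ => s ^ (β/2)) (‖x‖^2 + δ^2) :=
        Real.contDiffAt_rpow_const_of_ne (hbase x).ne'
      exact contDiffAt_const.sub (by have := h2.comp x h1; exact this)
    exact (ramp_contDiff hη).comp hinner
  have hu_supp : HasCompactSupport u := by
    apply HasCompactSupport.intro (isCompact_closedBall (0 : EuclideanSpace ℝ (Fin N)) 1)
    intro x hx
    apply hu_zero
    simp only [mem_closedBall, dist_zero_right, not_le] at hx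
    exact hx.le
  have hu_diff : Differentiable ℝ u := fun x => (hu_deriv x).differentiableAt
  have hgrad_norm : ∀ x, ‖gradient u x‖ = ‖D x‖ := by
    intro x
    rw [norm_gradient_eq u x, (hu_deriv x).fderiv]
  -- unit vector
  have hNfin : 0 < N := hN
  set y0 : EuclideanSpace ℝ (Fin N) := EuclideanSpace.single (⟨0, hNfin⟩ : Fin N) (1:ℝ)
    with hy0_def
  have hy0 : ‖y0‖ = 1 := by simp [hy0_def]
  haveI : Nontrivial (EuclideanSpace ℝ (Fin N)) :=
    ⟨⟨y0, 0, fun h => by rw [h, norm_zero] at hy0; exact one_ne_zero hy0.symm⟩⟩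
  -- radial profile
  set φ : ℝ → ℝ := fun r => Real.smoothTransition ((c - (r^2+δ^2) ^ (β/2))/η) *
      ((β/2) * (r^2+δ^2) ^ (β/2 - 1) * (2*r)) with hφ_def
  have hφ_eq : ∀ x : EuclideanSpace ℝ (Fin N), ‖D x‖ = φ ‖x‖ := by
    intro x
    rw [hD_norm x, hφ_def]
  have hφ_of : ∀ r : ℝ, 0 ≤ r → φ r = ‖D (r • y0)‖ := by
    intro r hr
    rw [hφ_eq, norm_smul, hy0, Real.norm_eq_abs, abs_of_nonneg hr, mul_one]
  have hφ_nonneg : ∀ r : ℝ, 0 ≤ r → 0 ≤ φ r := by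
    intro r hr; rw [hφ_of r hr]; exact norm_nonneg _
  have hφ_zero : ∀ r : ℝ, 1 ≤ r → φ r = 0 := by
    intro r hr
    rw [hφ_of r (by linarith)]
    have hn : ‖r • y0‖ = r := by
      rw [norm_smul, hy0, Real.norm_eq_abs, abs_of_nonneg (by linarith), mul_one]
    rw [hD_norm, hθ_zero _ (by rw [hn]; exact hr)]
    ring
  have hφ_le : ∀ r : ℝ, 0 ≤ r → r < 1 → φ r ≤ β * r ^ (β - 1) := by
    intro r hr0 hr1
    rw [hφ_of r hr0]
    have hn : ‖r • y0‖ = r := by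
      rw [norm_smul, hy0, Real.norm_eq_abs, abs_of_nonneg hr0, mul_one]
    have := hD_le (r • y0) (by rw [hn]; exact hr1)
    rwa [hn] at this
  -- energy computation
  set ω : ℝ := (volume (ball (0 : EuclideanSpace ℝ (Fin N)) 1)).toReal with hω_def
  have hω_nonneg : 0 ≤ ω := ENNReal.toReal_nonneg
  set e : ℝ := ((N:ℝ) - 1) + (β - 1) * p with he_def
  have hβmul : β * (p - 1) = p - N := by
    rw [hβ_def]; exact div_mul_cancel₀ _ (by linarith)
  have he1 : e + 1 = β := by
    rw [he_def]; nlinarith [hβmul]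
  have he : -1 < e := by
    have : e = β - 1 := by linarith
    rw [this]; linarith
  have hfr : Module.finrank ℝ (EuclideanSpace ℝ (Fin N)) = N := by
    simp [finrank_euclideanSpace]
  have hcast : ((N - 1 : ℕ) : ℝ) = (N : ℝ) - 1 := by
    rw [Nat.cast_sub hN]
    norm_num
  have hEnergy : ∫ x : EuclideanSpace ℝ (Fin N), ‖gradient u x‖ ^ p
      ≤ (N:ℝ) * ω * β ^ (p-1) := by
    have hrw : (fun x : EuclideanSpace ℝ (Fin N) => ‖gradient u x‖ ^ p)
        = fun x => (fun r => (φ r) ^ p) ‖x‖ := by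
      funext x
      rw [hgrad_norm x, hφ_eq x]
    rw [hrw, integral_fun_norm_addHaar volume (fun r => (φ r) ^ p), hfr]
    rw [nsmul_eq_mul, smul_eq_mul, measureReal_def, ← hω_def]
    have hI : (∫ y in Ioi (0:ℝ), y ^ (N - 1) • (φ y) ^ p) ≤ β ^ (p-1) := by
      set g : ℝ → ℝ := (Ioo (0:ℝ) 1).indicator (fun r => β ^ p * r ^ e) with hg_def
      have hg_int : Integrable g (volume.restrict (Ioi (0:ℝ))) := by
        apply Integrable.restrict
        rw [hg_def, integrable_indicator_iff measurableSet_Ioo]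
        have h1 : IntegrableOn (fun r : ℝ => r ^ e) (Ioo (0:ℝ) 1) volume := by
          have h2 := (intervalIntegral.intervalIntegrable_rpow' (a := 0) (b := 1) he)
          rw [intervalIntegrable_iff_integrableOn_Ioc_of_le zero_le_one] at h2
          exact h2.mono_set Ioo_subset_Ioc_self
        exact h1.const_mul _
      have hf0 : 0 ≤ᵐ[volume.restrict (Ioi (0:ℝ))]
          (fun y => y ^ (N - 1) • (φ y) ^ p) := by
        filter_upwards [ae_restrict_mem measurableSet_Ioi] with y hy
        have hy0 : (0:ℝ) < y := hy
        simp only [smul_eq_mul, Pi.zero_apply]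
        exact mul_nonneg (by positivity) (Real.rpow_nonneg (hφ_nonneg y hy0.le) _)
      have hfg : (fun y => y ^ (N - 1) • (φ y) ^ p) ≤ᵐ[volume.restrict (Ioi (0:ℝ))] g := by
        filter_upwards [ae_restrict_mem measurableSet_Ioi] with y hy
        have hy0 : (0:ℝ) < y := hy
        simp only [smul_eq_mul]
        rcases lt_or_ge y 1 with hy1 | hy1
        · have hgy : g y = β ^ p * y ^ e := by
            rw [hg_def, indicator_of_mem (by exact ⟨hy0, hy1⟩ : y ∈ Ioo (0:ℝ) 1)]
          rw [hgy]
          calc y ^ (N - 1) * (φ y) ^ p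
              ≤ y ^ (N - 1) * (β * y ^ (β - 1)) ^ p := by
                apply mul_le_mul_of_nonneg_left _ (by positivity)
                exact Real.rpow_le_rpow (hφ_nonneg y hy0.le) (hφ_le y hy0.le hy1) hppos.le
            _ = β ^ p * y ^ e := by
                rw [Real.mul_rpow hβpos.le (Real.rpow_nonneg hy0.le _),
                  ← Real.rpow_natCast y (N - 1), hcast,
                  ← Real.rpow_mul hy0.le (β - 1) p]
                rw [show y ^ ((N:ℝ) - 1) * (β ^ p * y ^ ((β-1) * p))
                    = β ^ p * (y ^ ((N:ℝ) - 1) * y ^ ((β-1) * p)) by ring,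
                  ← Real.rpow_add hy0, he_def]
        · have hgy : g y = 0 := by
            rw [hg_def, indicator_of_notMem (by simp [hy1] : y ∉ Ioo (0:ℝ) 1)]
          rw [hgy, hφ_zero y hy1, Real.zero_rpow hppos.ne', mul_zero]
      calc (∫ y in Ioi (0:ℝ), y ^ (N - 1) • (φ y) ^ p)
          ≤ ∫ y in Ioi (0:ℝ), g y := integral_mono_of_nonneg hf0 hg_int hfg
        _ = ∫ y in Ioo (0:ℝ) 1, β ^ p * y ^ e := by
            rw [hg_def, setIntegral_indicator measurableSet_Ioo,
              inter_eq_self_of_subset_right Ioo_subset_Ioi_self]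
        _ = β ^ p * ∫ y in Ioo (0:ℝ) 1, y ^ e := by rw [integral_const_mul]
        _ = β ^ p * ((1 ^ (e+1) - (0:ℝ) ^ (e+1))/(e+1)) := by
            rw [← integral_Ioc_eq_integral_Ioo, ← intervalIntegral.integral_of_le zero_le_one,
              integral_rpow (Or.inl he)]
        _ = β ^ p * (1/β) := by
            rw [Real.one_rpow, Real.zero_rpow (by rw [he1]; exact hβpos.ne'), he1]
            norm_num
        _ = β ^ (p - 1) := by
            rw [Real.rpow_sub hβpos, Real.rpow_one]
            ring
    calc (N:ℝ) * (ω * ∫ y in Ioi (0:ℝ), y ^ (N - 1) • (φ y) ^ p)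
        ≤ (N:ℝ) * (ω * β ^ (p-1)) := by
          apply mul_le_mul_of_nonneg_left _ (Nat.cast_nonneg N)
          exact mul_le_mul_of_nonneg_left hI hω_nonneg
      _ = (N:ℝ) * ω * β ^ (p-1) := by ring
  -- Hölder seminorm bounds
  set α : ℝ := 1 - (N:ℝ)/p with hα_def
  have hα0 : 0 < α := by
    have h1 : (N:ℝ)/p < 1 := (div_lt_one hppos).2 hp
    rw [hα_def]; linarith
  have hα1 : α ≤ 1 := by
    have h1 : 0 ≤ (N:ℝ)/p := by positivity
    rw [hα_def]; linarith
  have hLip : ∀ x y : EuclideanSpace ℝ (Fin N), |u x - u y| ≤ C₁ * ‖x - y‖ := by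
    intro x y
    have h := Convex.norm_image_sub_le_of_norm_fderiv_le
      (fun z (_ : z ∈ Set.univ) => (hu_deriv z).differentiableAt)
      (fun z (_ : z ∈ Set.univ) => by rw [(hu_deriv z).fderiv]; exact hD_glob z)
      convex_univ (mem_univ y) (mem_univ x)
    rwa [Real.norm_eq_abs] at h
  set K : ℝ := max C₁ (2*c) with hK_def
  have hK_nonneg : 0 ≤ K := le_trans hC₁_nonneg (le_max_left _ _)
  have hsem_ub : holderSem α Set.univ u ≤ ENNReal.ofReal K := by
    apply holderSem_le
    intro x y
    have hd0 : 0 ≤ ‖x - y‖ := norm_nonneg _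
    rcases eq_or_lt_of_le hd0 with h0 | h0
    · have hxy : x = y := by
        rw [← sub_eq_zero]; exact norm_eq_zero.1 h0.symm
      rw [hxy, sub_self, abs_zero, zero_div]
      exact hK_nonneg
    · rcases le_or_gt ‖x - y‖ 1 with h1 | h1
      · have hda : 0 < ‖x - y‖ ^ α := Real.rpow_pos_of_pos h0 _
        rw [div_le_iff₀ hda]
        have hdd : ‖x - y‖ ≤ ‖x - y‖ ^ α := by
          calc ‖x - y‖ = ‖x - y‖ ^ (1:ℝ) := (Real.rpow_one _).symm
            _ ≤ ‖x - y‖ ^ α := Real.rpow_le_rpow_of_exponent_ge h0 h1 hα1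
        calc |u x - u y| ≤ C₁ * ‖x - y‖ := hLip x y
          _ ≤ K * ‖x - y‖ ^ α := mul_le_mul (le_max_left _ _) hdd h0.le hK_nonneg
      · have hda : (1:ℝ) ≤ ‖x - y‖ ^ α := by
          calc (1:ℝ) = 1 ^ α := (Real.one_rpow _).symm
            _ ≤ ‖x - y‖ ^ α := Real.rpow_le_rpow zero_le_one h1.le hα0.le
        have hnum : |u x - u y| ≤ 2 * c := by
          have hx' := hu_nonneg x; have hy' := hu_nonneg y
          have hx'' := hu_le_c x; have hy'' := hu_le_c y
          rw [abs_le]; constructor <;> nlinarith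
        calc |u x - u y| / ‖x - y‖ ^ α ≤ |u x - u y| := div_le_self (abs_nonneg _) hda
          _ ≤ 2*c := hnum
          _ ≤ K := le_max_right _ _
  have hsem_lb : ENNReal.ofReal (1 - (δ^2:ℝ) ^ (β/2) - η) ≤ holderSem α Set.univ u := by
    refine le_trans ?_ (le_holderSem (0 : EuclideanSpace ℝ (Fin N)) y0)
    apply ENNReal.ofReal_le_ofReal
    have h1 : ‖(0 : EuclideanSpace ℝ (Fin N)) - y0‖ = 1 := by
      rw [zero_sub, norm_neg, hy0]
    rw [h1, Real.one_rpow, div_one, hu_zero y0 hy0.ge, sub_zero,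
      abs_of_nonneg (hu_nonneg 0)]
    exact hu0
  -- normalization and conclusion
  set s : ENNReal := holderSem α Set.univ u with hs_def
  set lb : ℝ := 1 - (δ^2:ℝ) ^ (β/2) - η with hlb_def
  have hs_ne_top : s ≠ ⊤ := ne_top_of_le_ne_top ENNReal.ofReal_ne_top hsem_ub
  have hst_lb : lb ≤ s.toReal := by
    have h := ENNReal.toReal_mono hs_ne_top hsem_lb
    rwa [ENNReal.toReal_ofReal hlb.le] at h
  have hst_pos : 0 < s.toReal := lt_of_lt_of_le hlb hst_lb
  set k : ℝ := (s.toReal)⁻¹ with hk_def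
  have hk_pos : 0 < k := inv_pos.2 hst_pos
  set v : EuclideanSpace ℝ (Fin N) → ℝ := fun x => k * u x with hv_def
  have hv_contDiff : ContDiff ℝ (⊤:ℕ∞) v := contDiff_const.mul hu_contDiff
  have hv_supp : HasCompactSupport v :=
    hu_supp.comp_left (g := fun t : ℝ => k * t) (by norm_num)
  have hv_sem : holderSem α Set.univ v = 1 := by
    rw [hv_def, holderSem_const_mul, abs_of_nonneg hk_pos.le]
    show ENNReal.ofReal k * s = 1
    rw [← ENNReal.ofReal_toReal hs_ne_top, ← ENNReal.ofReal_mul hk_pos.le, hk_def,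
      inv_mul_cancel₀ hst_pos.ne']
    exact ENNReal.ofReal_one
  have hv_deriv : ∀ x, HasFDerivAt v (k • D x) x := fun x => (hu_deriv x).const_mul k
  have hv_grad : ∀ x, ‖gradient v x‖ = k * ‖gradient u x‖ := by
    intro x
    rw [norm_gradient_eq v x, (hv_deriv x).fderiv]
    have h := norm_smul k (D x)
    rw [h, Real.norm_eq_abs, abs_of_nonneg hk_pos.le, hgrad_norm x]
  have hv_energy : ∫ x : EuclideanSpace ℝ (Fin N), ‖gradient v x‖ ^ p
      = k ^ p * ∫ x : EuclideanSpace ℝ (Fin N), ‖gradient u x‖ ^ p := by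
    rw [← integral_const_mul]
    congr 1
    funext x
    rw [hv_grad x, Real.mul_rpow hk_pos.le (norm_nonneg _)]
  have hmc : morreyConst N p ≤ ∫ x : EuclideanSpace ℝ (Fin N), ‖gradient v x‖ ^ p := by
    unfold morreyConst
    apply csInf_le
    · refine ⟨0, fun E hE => ?_⟩
      obtain ⟨w, _, _, _, hEw⟩ := hE
      rw [hEw]
      exact integral_nonneg fun x => Real.rpow_nonneg (norm_nonneg _) _
    · exact ⟨v, hv_contDiff, hv_supp, by rw [← hα_def]; exact hv_sem, rfl⟩
  have hk_le : k ≤ lb⁻¹ := by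
    rw [hk_def]
    exact inv_anti₀ hlb hst_lb
  have hR_nonneg : 0 ≤ (N:ℝ) * ω * β ^ (p-1) :=
    mul_nonneg (mul_nonneg (Nat.cast_nonneg N) hω_nonneg) (Real.rpow_nonneg hβpos.le _)
  calc morreyConst N p ≤ k ^ p * ∫ x : EuclideanSpace ℝ (Fin N), ‖gradient u x‖ ^ p := by
        rw [← hv_energy]; exact hmc
    _ ≤ k ^ p * ((N:ℝ) * ω * β ^ (p-1)) :=
        mul_le_mul_of_nonneg_left hEnergy (Real.rpow_nonneg hk_pos.le _)
    _ ≤ (lb⁻¹) ^ p * ((N:ℝ) * ω * β ^ (p-1)) :=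
        mul_le_mul_of_nonneg_right (Real.rpow_le_rpow hk_pos.le hk_le hppos.le) hR_nonneg
    _ = ((N:ℝ) * ω * β ^ (p-1)) / lb ^ p := by
        rw [Real.inv_rpow hlb.le]
        ring

lemma bound_eps {N : ℕ} (hN : 0 < N) {p : ℝ} (hp : (N : ℝ) < p) {ε : ℝ}
    (hε0 : 0 < ε) (hε1 : ε < 1) :
    morreyConst N p ≤
      ((N : ℝ) * (volume (ball (0 : EuclideanSpace ℝ (Fin N)) 1)).toReal *
        ((p - N) / (p - 1)) ^ (p - 1)) / (1 - ε) ^ p := by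
  have hN1 : (1 : ℝ) ≤ N := by exact_mod_cast hN
  have hp1 : (1 : ℝ) < p := lt_of_le_of_lt hN1 hp
  set β : ℝ := (p - N)/(p-1) with hβ_def
  have hβpos : 0 < β := div_pos (by linarith) (by linarith)
  have hε2 : 0 < ε/2 := by linarith
  set δ : ℝ := (ε/2) ^ (1/β) with hδ_def
  have hδpos : 0 < δ := Real.rpow_pos_of_pos hε2 _
  have hδ2 : (δ^2 : ℝ) = (ε/2) ^ (2/β) := by
    rw [hδ_def, ← Real.rpow_natCast ((ε/2) ^ (1/β)) 2, ← Real.rpow_mul hε2.le]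
    congr 1
    push_cast
    field_simp
  have hkey : (δ^2 : ℝ) ^ (β/2) = ε/2 := by
    rw [hδ2, ← Real.rpow_mul hε2.le]
    have : 2/β * (β/2) = 1 := by field_simp
    rw [this, Real.rpow_one]
  have hη : (0:ℝ) < ε/2 := hε2
  have hlb : 0 < 1 - (δ^2 : ℝ) ^ ((p - N)/(p-1)/2) - ε/2 := by
    rw [show (p - (N:ℝ))/(p-1)/2 = β/2 from rfl, hkey]
    linarith
  have h := construction hN hp hδpos hη hlb
  have heq : 1 - (δ^2 : ℝ) ^ ((p - N)/(p-1)/2) - ε/2 = 1 - ε := by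
    rw [show (p - (N:ℝ))/(p-1)/2 = β/2 from rfl, hkey]
    ring
  rwa [heq] at h

lemma morreyConst_le {N : ℕ} (hN : 0 < N) (p : ℝ) (hp : (N : ℝ) < p) :
    morreyConst N p ≤
      (N : ℝ) * (volume (ball (0 : EuclideanSpace ℝ (Fin N)) 1)).toReal *
        ((p - N) / (p - 1)) ^ (p - 1) := by
  set R : ℝ := (N : ℝ) * (volume (ball (0 : EuclideanSpace ℝ (Fin N)) 1)).toReal *
    ((p - N) / (p - 1)) ^ (p - 1) with hR_def
  have hcont : ContinuousAt (fun ε : ℝ => R / (1-ε)^p) 0 := by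
    have h1 : ContinuousAt (fun ε : ℝ => (1-ε)) 0 := by fun_prop
    have h2 : ContinuousAt (fun s : ℝ => s ^ p) ((1:ℝ) - 0) := by
      apply Real.continuousAt_rpow_const
      norm_num
    have h3 : ContinuousAt (fun ε : ℝ => (1-ε)^p) 0 := h2.comp h1
    apply ContinuousAt.div continuousAt_const h3
    norm_num
  have htend : Filter.Tendsto (fun ε : ℝ => R / (1-ε)^p) (nhdsWithin 0 (Set.Ioi 0)) (nhds R) := by
    have h0 : R / ((1:ℝ)-0)^p = R := by
      norm_num
    have := hcont.tendsto
    rw [h0] at this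
    exact this.mono_left nhdsWithin_le_nhds
  have hev : ∀ᶠ ε in nhdsWithin (0:ℝ) (Set.Ioi 0), morreyConst N p ≤ R / (1-ε)^p := by
    filter_upwards [Ioo_mem_nhdsGT_of_mem (Set.mem_Ico.2 ⟨le_rfl, one_pos⟩)] with ε hε
    exact bound_eps hN hp hε.1 hε.2
  exact ge_of_tendsto htend hev

end Construction

end MorreyAux

/-- Upper bound for the sharp Morrey constant:
`𝔪_p(ℝ^N) ≤ N ω_N ((p-N)/(p-1))^{p-1}` for `p > N`. -/
theorem morreyConst_upper_bound {N : ℕ} (hN : 0 < N) (p : ℝ) (hp : (N : ℝ) < p) :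
    morreyConst N p ≤
      (N : ℝ) * (MeasureTheory.volume (Metric.ball (0 : EuclideanSpace ℝ (Fin N)) 1)).toReal *
        ((p - N) / (p - 1)) ^ (p - 1) := by
  exact MorreyAux.morreyConst_le hN p hp
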